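/- Let W be a basic localizer on Cat, and let α: I → J be a Grothendieck fibration between small categories such that for every object j of J the fiber I_j satisfies: the functor I_j → ⋆ is in W. Then α ∈ W. -/

import Mathlib

open CategoryTheory CategoryTheory.Limits

universe u

/-- A class of morphisms is weakly saturated if it contains identities,
satisfies 2-out-of-3, and satisfies (WS3). -/
structure IsWeaklySaturated {C : Type*} [Category C] (W : MorphismProperty C) : Prop where
  id_mem : ∀ X : C, W (𝟙 X)
  comp_mem : ∀ ⦃X Y Z : C⦄ (f : X ⟶ Y) (g : Y ⟶ Z), W f → W g → W (f ≫ g)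
  of_comp_left : ∀ ⦃X Y Z : C⦄ (f : X ⟶ Y) (g : Y ⟶ Z), W f → W (f ≫ g) → W g
  of_comp_right : ∀ ⦃X Y Z : C⦄ (f : X ⟶ Y) (g : Y ⟶ Z), W g → W (f ≫ g) → W f
  ws3 : ∀ ⦃X Y : C⦄ (p : Y ⟶ X) (s : X ⟶ Y), s ≫ p = 𝟙 X → W (p ≫ s) → W p

/-- The terminal category, as an object of `Cat`. -/
abbrev Cat.pt : Cat.{u, u} := Cat.of (Discrete PUnit.{u + 1})

/-- A basic localizer (Grothendieck's « localisateur fondamental ») on `Cat`: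
(L1) weak saturation, (L2) categories with a terminal object are aspherical,
(L3) locality over a base via comma categories. -/
structure IsBasicLocalizer (W : MorphismProperty Cat.{u, u}) : Prop where
  weaklySaturated : IsWeaklySaturated W
  terminal : ∀ (I : Cat.{u, u}) [HasTerminal I],
    W (X := I) (Y := Cat.pt.{u}) (Functor.star I).toCatHom
  locality : ∀ ⦃I J K : Cat.{u, u}⦄ (w : I ⟶ J) (v : J ⟶ K),
    (∀ k : K,
      W (X := Cat.of (Comma ((w.toFunctor : ↥I ⥤ ↥J) ⋙ (v.toFunctor : ↥J ⥤ ↥K)) (Functor.fromPUnit.{u} k)))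
        (Y := Cat.of (Comma (v.toFunctor : ↥J ⥤ ↥K) (Functor.fromPUnit.{u} k)))
        (Comma.preLeft (w.toFunctor : ↥I ⥤ ↥J) (v.toFunctor : ↥J ⥤ ↥K) (Functor.fromPUnit.{u} k)).toCatHom) →
    W w

namespace BL
open Opposite

instance (X Y : Discrete PUnit.{u+1}) : Subsingleton (X ⟶ Y) :=
  ⟨by rintro ⟨⟨h1⟩⟩ ⟨⟨h2⟩⟩; rfl⟩

instance (X Y : ↥Cat.pt.{u}) : Subsingleton (X ⟶ Y) :=
  ⟨by rintro ⟨⟨h1⟩⟩ ⟨⟨h2⟩⟩; rfl⟩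

instance : Subsingleton (Discrete PUnit.{u+1}) :=
  ⟨by rintro ⟨⟨⟩⟩ ⟨⟨⟩⟩; rfl⟩

theorem toPt_eq {C : Type*} [Category C] (F G : C ⥤ Discrete PUnit.{u+1}) : F = G :=
  CategoryTheory.Functor.ext (fun _ => Subsingleton.elim _ _) (fun _ _ _ => Subsingleton.elim _ _)

def pstar (C : Cat.{u,u}) : C ⟶ Cat.pt.{u} := (Functor.star C).toCatHom

variable {W : MorphismProperty Cat.{u,u}}

lemma mem_of_star_star (hW : IsBasicLocalizer W) {C D : Cat.{u,u}} (u : C ⟶ D)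
    (hC : W (pstar C)) (hD : W (pstar D)) : W u :=
  hW.weaklySaturated.of_comp_right u (pstar D) hD
    (by rw [show u ≫ pstar D = pstar C from Cat.ext (toPt_eq _ _)]; exact hC)

lemma star_mem_comp (hW : IsBasicLocalizer W) {C D : Cat.{u,u}} (u : C ⟶ D)
    (hu : W u) (hD : W (pstar D)) : W (pstar C) := by
  rw [← show u ≫ pstar D = pstar C from Cat.ext (toPt_eq _ _)]
  exact hW.weaklySaturated.comp_mem _ _ hu hD

lemma star_mem_of_comp (hW : IsBasicLocalizer W) {C D : Cat.{u,u}} (u : C ⟶ D)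
    (hu : W u) (hC : W (pstar C)) : W (pstar D) :=
  hW.weaklySaturated.of_comp_left u (pstar D) hu
    (by rw [show u ≫ pstar D = pstar C from Cat.ext (toPt_eq _ _)]; exact hC)

/-- Terminal object in `Comma F (fromPUnit b)` from an adjunction `F ⊣ G`. -/
noncomputable def commaTerminalOfAdjunction {A B : Type u} [Category.{u} A] [Category.{u} B]
    {F : A ⥤ B} {G : B ⥤ A} (adj : F ⊣ G) (b : B) :
    IsTerminal (⟨G.obj b, ⟨⟨⟩⟩, adj.counit.app b⟩ : Comma F (Functor.fromPUnit.{u} b)) := by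
  refine IsTerminal.ofUniqueHom (fun Y => ⟨(adj.homEquiv Y.left b) Y.hom, ⟨⟨Subsingleton.elim _ _⟩⟩, ?_⟩) ?_
  · show F.map ((adj.homEquiv Y.left b) Y.hom) ≫ adj.counit.app b = Y.hom ≫ _
    have : (adj.homEquiv Y.left b).symm ((adj.homEquiv Y.left b) Y.hom) = Y.hom :=
      Equiv.symm_apply_apply _ _
    rw [Adjunction.homEquiv_counit] at this
    simp [this]
  · intro Y m
    have hl : m.left = (adj.homEquiv Y.left b) Y.hom := by
      have hw := m.w
      have h2 : (adj.homEquiv Y.left b).symm m.left = Y.hom := by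
        rw [Adjunction.homEquiv_counit]
        simpa using hw
      rw [← h2, Equiv.apply_symm_apply]
    apply CommaMorphism.ext
    · exact hl
    · exact Subsingleton.elim _ _

lemma asph (hW : IsBasicLocalizer W) {A B : Cat.{u,u}} (w : A ⟶ B)
    (h : ∀ b : ↥B,
      W (pstar (Cat.of (Comma ((w.toFunctor : ↥A ⥤ ↥B) ⋙ ((𝟙 B : B ⟶ B).toFunctor : ↥B ⥤ ↥B)) (Functor.fromPUnit.{u} b))))) :
    W w := by
  apply hW.locality w (𝟙 B)
  intro b
  apply mem_of_star_star hW
  · exact h b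
  · have : HasTerminal (Comma ((𝟙 B : B ⟶ B).toFunctor : ↥B ⥤ ↥B) (Functor.fromPUnit.{u} b)) :=
      (commaTerminalOfAdjunction Adjunction.id b).hasTerminal
    exact @IsBasicLocalizer.terminal W hW (Cat.of _) this

lemma adj_mem (hW : IsBasicLocalizer W) {A B : Cat.{u,u}} (F : A ⟶ B) (G : ↥B ⥤ ↥A)
    (adj : (F.toFunctor : ↥A ⥤ ↥B) ⊣ G) : W F := by
  apply asph hW
  intro b
  have : HasTerminal (Comma ((F.toFunctor : ↥A ⥤ ↥B) ⋙ ((𝟙 B : B ⟶ B).toFunctor : ↥B ⥤ ↥B)) (Functor.fromPUnit.{u} b)) :=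
    (commaTerminalOfAdjunction (adj.ofNatIsoLeft (Functor.rightUnitor _).symm) b).hasTerminal
  exact @IsBasicLocalizer.terminal W hW (Cat.of _) this

lemma equiv_mem (hW : IsBasicLocalizer W) {A B : Cat.{u,u}} (e : ↥A ≌ ↥B) :
    W (X := A) (Y := B) e.functor.toCatHom :=
  adj_mem hW (A := A) (B := B) e.functor.toCatHom e.inverse e.toAdjunction

lemma star_mem_of_hasInitial (hW : IsBasicLocalizer W) (C : Cat.{u,u}) [HasInitial ↥C] :
    W (pstar C) := by
  let F0 : Cat.pt.{u} ⟶ C := (Functor.fromPUnit.{u} (⊥_ ↥C)).toCatHom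
  have adj : (F0.toFunctor : ↥Cat.pt.{u} ⥤ ↥C) ⊣ Functor.star ↥C := by
    refine Adjunction.mkOfHomEquiv
      { homEquiv := fun X c =>
          { toFun := fun _ => ⟨⟨Subsingleton.elim _ _⟩⟩
            invFun := fun _ => initial.to c
            left_inv := fun f => initial.hom_ext _ _
            right_inv := fun f => Subsingleton.elim _ _ }
        homEquiv_naturality_left_symm := fun f g => initial.hom_ext _ _
        homEquiv_naturality_right := fun f g => Subsingleton.elim _ _ }
  have hF0 : W F0 := adj_mem hW F0 _ adj
  exact hW.weaklySaturated.of_comp_left F0 (pstar C) hF0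
    (by rw [show F0 ≫ pstar C = 𝟙 Cat.pt.{u} from Cat.ext (toPt_eq _ _)]
        exact hW.weaklySaturated.id_mem _)

variable {C : Type u} [Category.{u} C]

abbrev Tw (C : Type u) [Category.{u} C] := (Functor.hom C).Elements

abbrev twq (C : Type u) [Category.{u} C] : Tw C ⥤ C :=
  CategoryOfElements.π (Functor.hom C) ⋙ CategoryTheory.Prod.snd Cᵒᵖ C

abbrev twr (C : Type u) [Category.{u} C] : Tw C ⥤ Cᵒᵖ :=
  CategoryOfElements.π (Functor.hom C) ⋙ CategoryTheory.Prod.fst Cᵒᵖ C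

variable (c : C)

section q

def qL : Comma (twq C ⋙ 𝟭 C) (Functor.fromPUnit.{u} c) ⥤ (Over c)ᵒᵖ where
  obj X := op (Over.mk (X.left.2 ≫ X.hom))
  map {X Y} m := (Over.homMk (m.left.val.1.unop)
    (by
      have hp := m.left.property
      have hw := m.w
      simp only [Functor.hom_map] at hp
      simp only [Functor.comp_map, Functor.id_map] at hw
      dsimp at hw ⊢
      have h1 : X.hom = m.left.val.2 ≫ Y.hom := (Category.comp_id X.hom).symm.trans m.w.symm
      rw [h1]
      have hp' : m.left.val.1.unop ≫ X.left.snd ≫ m.left.val.2 = Y.left.snd := hp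
      exact ((Category.assoc _ _ _).trans (congrArg (fun z => m.left.val.1.unop ≫ z) (Category.assoc _ _ _))).symm.trans (congrArg (fun z => z ≫ Y.hom) hp'))).op
  map_id X := by
    apply Quiver.Hom.unop_inj
    apply CommaMorphism.ext <;> simp <;> rfl
  map_comp f g := by
    apply Quiver.Hom.unop_inj
    apply CommaMorphism.ext <;> simp <;> rfl

def qR : (Over c)ᵒᵖ ⥤ Comma (twq C ⋙ 𝟭 C) (Functor.fromPUnit.{u} c) where
  obj h := ⟨⟨(op h.unop.left, c), h.unop.hom⟩, ⟨⟨⟩⟩, 𝟙 c⟩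
  map {h h'} m :=
    { left := ⟨(m.unop.left.op, 𝟙 c), by
        have := Over.w m.unop
        show m.unop.left ≫ h.unop.hom ≫ 𝟙 c = h'.unop.hom
        simp [this]⟩
      right := 𝟙 _
      w := by rfl }
  map_id := by
    intros
    apply CommaMorphism.ext
    · apply CategoryOfElements.ext
      dsimp
      rfl
    · exact Subsingleton.elim _ _
  map_comp := by
    intros
    apply CommaMorphism.ext
    · apply CategoryOfElements.ext
      dsimp
      ext
      · rfl
      · exact (Category.id_comp (𝟙 c)).symm
    · exact Subsingleton.elim _ _

def qAdj : qL c ⊣ qR c :=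
  Adjunction.mkOfHomEquiv
    { homEquiv := fun X h =>
        { toFun := fun g =>
            { left := ⟨(g.unop.left.op, X.hom), by
                have := Over.w g.unop
                dsimp [qR] at this ⊢
                exact this⟩
              right := ⟨⟨Subsingleton.elim _ _⟩⟩
              w := by simp [qR]; exact Category.comp_id _ }
          invFun := fun m =>
            (Over.homMk (m.left.val.1.unop) (by
              have hp := m.left.property
              have hw := m.w
              dsimp [qR] at hp hw ⊢
              have hv : m.left.val.2 = X.hom := (Category.comp_id _).symm.trans (hw.trans (Category.comp_id _))
              rw [← hv]
              exact hp)).op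
          left_inv := fun g => by
            apply Quiver.Hom.unop_inj
            apply CommaMorphism.ext
            · rfl
            · exact Subsingleton.elim _ _
          right_inv := fun m => by
            apply CommaMorphism.ext
            · apply CategoryOfElements.ext
              dsimp
              ext
              · rfl
              · have hw := m.w
                dsimp [qR] at hw
                exact ((Category.comp_id _).symm.trans (hw.trans (Category.comp_id _))).symm
            · exact Subsingleton.elim _ _ }
      homEquiv_naturality_left_symm := fun f g => by
        apply Quiver.Hom.unop_inj
        apply CommaMorphism.ext
        · rfl
        · exact Subsingleton.elim _ _
      homEquiv_naturality_right := fun f g => by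
        apply CommaMorphism.ext
        · apply CategoryOfElements.ext
          dsimp
          ext
          · rfl
          · exact (Category.comp_id _).symm
        · exact Subsingleton.elim _ _ }

end q

section r
variable (k : Cᵒᵖ)

def rL : Comma (twr C ⋙ 𝟭 Cᵒᵖ) (Functor.fromPUnit.{u} k) ⥤ Under k.unop where
  obj X := Under.mk (X.hom.unop ≫ X.left.snd)
  map {X Y} m := Under.homMk (m.left.val.2) (by
    have hp := m.left.property
    have hw := m.w
    dsimp at hp hw ⊢
    have hu : m.left.val.1 ≫ Y.hom = X.hom := hw.trans (Category.comp_id _)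
    have hu' : X.hom.unop = Y.hom.unop ≫ m.left.val.1.unop := by
      rw [← hu]; rfl
    have e1 := congrArg (fun z => Y.hom.unop ≫ z) hp
    dsimp at e1
    calc (X.hom.unop ≫ X.left.snd) ≫ m.left.val.2
        = X.hom.unop ≫ X.left.snd ≫ m.left.val.2 := Category.assoc _ _ _
      _ = (Y.hom.unop ≫ m.left.val.1.unop) ≫ X.left.snd ≫ m.left.val.2 := by rw [hu']; rfl
      _ = Y.hom.unop ≫ Y.left.snd := (Category.assoc _ _ _).trans e1)
  map_id X := by
    apply StructuredArrow.hom_ext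
    rfl
  map_comp f g := by
    apply StructuredArrow.hom_ext
    rfl

def rR : Under k.unop ⥤ Comma (twr C ⋙ 𝟭 Cᵒᵖ) (Functor.fromPUnit.{u} k) where
  obj h := ⟨⟨(k, h.right), h.hom⟩, ⟨⟨⟩⟩, 𝟙 k⟩
  map {h h'} m :=
    { left := ⟨(𝟙 k, m.right), by
        have := Under.w m
        dsimp
        exact (by simp : (𝟙 k).unop ≫ h.hom ≫ m.right = h'.hom)⟩
      right := 𝟙 _
      w := by rfl }
  map_id h := by
    apply CommaMorphism.ext
    · apply CategoryOfElements.ext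
      dsimp
      rfl
    · exact Subsingleton.elim _ _
  map_comp f g := by
    apply CommaMorphism.ext
    · apply CategoryOfElements.ext
      dsimp
      ext
      · exact (Category.id_comp (𝟙 k)).symm
      · rfl
    · exact Subsingleton.elim _ _

def rAdj : rL k ⊣ rR k :=
  Adjunction.mkOfHomEquiv
    { homEquiv := fun X h =>
        { toFun := fun g =>
            { left := ⟨(X.hom, g.right), by
                have := Under.w g
                dsimp [rL] at this ⊢
                exact (Category.assoc _ _ _).symm.trans this⟩
              right := ⟨⟨Subsingleton.elim _ _⟩⟩
              w := by simp [rR]; exact Category.comp_id _ }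
          invFun := fun m =>
            Under.homMk (m.left.val.2) (by
              have hp := m.left.property
              have hw := m.w
              dsimp [rL, rR] at hp hw ⊢
              have hu : m.left.val.1 = X.hom := (Category.comp_id _).symm.trans (hw.trans (Category.comp_id _))
              have h2 : X.hom.unop ≫ X.left.snd ≫ m.left.val.2 = h.hom := by
                rw [← hu]; exact hp
              exact (Category.assoc _ _ _).trans h2)
          left_inv := fun g => by
            apply StructuredArrow.hom_ext
            rfl
          right_inv := fun m => by
            apply CommaMorphism.ext
            · apply CategoryOfElements.ext
              dsimp
              ext
              · have hw := m.w
                dsimp [rR] at hw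
                exact ((Category.comp_id _).symm.trans (hw.trans (Category.comp_id _))).symm
              · rfl
            · exact Subsingleton.elim _ _ }
      homEquiv_naturality_left_symm := fun f g => by
        apply StructuredArrow.hom_ext
        rfl
      homEquiv_naturality_right := fun f g => by
        apply CommaMorphism.ext
        · apply CategoryOfElements.ext
          dsimp
          ext
          · exact (Category.comp_id _).symm
          · rfl
        · exact Subsingleton.elim _ _ }

end r

section cat
variable {W : MorphismProperty Cat.{u,u}}

lemma tw_q_mem (hW : IsBasicLocalizer W) (A : Cat.{u,u}) : W (X := Cat.of (Tw ↥A)) (Y := A) (twq ↥A).toCatHom := by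
  apply asph hW
  intro c
  haveI hT : HasTerminal (Over c) := Over.mkIdTerminal.hasTerminal
  have h1 : W (X := Cat.of (Comma (twq ↥A ⋙ 𝟭 ↥A) (Functor.fromPUnit.{u} c)))
      (Y := Cat.of ((Over c)ᵒᵖ)) (qL c).toCatHom := adj_mem hW _ (qR c) (qAdj c)
  have h2 : W (pstar (Cat.of ((Over c)ᵒᵖ))) :=
    @star_mem_of_hasInitial _ hW (Cat.of ((Over c)ᵒᵖ))
      (@hasInitial_op_of_hasTerminal (Over c) _ hT)
  exact star_mem_comp hW _ h1 h2

lemma tw_r_mem (hW : IsBasicLocalizer W) (A : Cat.{u,u}) : W (X := Cat.of (Tw ↥A)) (Y := Cat.of (↥A)ᵒᵖ) (twr ↥A).toCatHom := by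
  apply asph hW
  intro k
  haveI hI : HasInitial (Under k.unop) := Under.mkIdInitial.hasInitial
  have h1 : W (X := Cat.of (Comma (twr ↥A ⋙ 𝟭 (↥A)ᵒᵖ) (Functor.fromPUnit.{u} k)))
      (Y := Cat.of (Under k.unop)) (rL k).toCatHom := adj_mem hW _ (rR k) (rAdj k)
  have h2 : W (pstar (Cat.of (Under k.unop))) :=
    @star_mem_of_hasInitial _ hW (Cat.of (Under k.unop)) hI
  exact star_mem_comp hW _ h1 h2

lemma star_op_mem (hW : IsBasicLocalizer W) (A : Cat.{u,u}) (h : W (pstar A)) : W (pstar (Cat.of (↥A)ᵒᵖ)) := by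
  have h1 : W (pstar (Cat.of (Tw ↥A))) := star_mem_comp hW _ (tw_q_mem hW A) h
  exact star_mem_of_comp hW _ (tw_r_mem hW A) h1

/-- Functoriality of the twisted arrow category. -/
def twmap {A B : Type u} [Category.{u} A] [Category.{u} B] (F : A ⥤ B) : Tw A ⥤ Tw B where
  obj X := ⟨(Opposite.op (F.obj X.fst.1.unop), F.obj X.fst.2), F.map X.snd⟩
  map {X Y} m := ⟨(F.op.map m.val.1, F.map m.val.2), by
    have hp := m.property
    change m.val.1.unop ≫ X.snd ≫ m.val.2 = Y.snd at hp
    show F.map m.val.1.unop ≫ F.map X.snd ≫ F.map m.val.2 = F.map Y.snd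
    exact ((congrArg (fun z => F.map m.val.1.unop ≫ z) (F.map_comp X.snd m.val.2)).symm.trans (F.map_comp _ _).symm).trans (congrArg F.map hp)⟩
  map_id X := by
    apply CategoryOfElements.ext
    dsimp
    ext
    · exact congrArg Quiver.Hom.op (F.map_id _)
    · exact F.map_id _
  map_comp f g := by
    apply CategoryOfElements.ext
    dsimp
    ext
    · exact congrArg Quiver.Hom.op (F.map_comp _ _)
    · exact F.map_comp _ _

lemma twmap_q {A B : Type u} [Category.{u} A] [Category.{u} B] (F : A ⥤ B) :
    twmap F ⋙ twq B = twq A ⋙ F := rfl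

lemma twmap_r {A B : Type u} [Category.{u} A] [Category.{u} B] (F : A ⥤ B) :
    twmap F ⋙ twr B = twr A ⋙ F.op := rfl

lemma mem_of_op (hW : IsBasicLocalizer W) {A B : Cat.{u,u}} (F : A ⟶ B)
    (hop : W (X := Cat.of (↥A)ᵒᵖ) (Y := Cat.of (↥B)ᵒᵖ) (Functor.op (F.toFunctor : ↥A ⥤ ↥B)).toCatHom) : W F := by
  have h1 : W (X := Cat.of (Tw ↥A)) (Y := Cat.of (Tw ↥B)) (twmap (F.toFunctor : ↥A ⥤ ↥B)).toCatHom := by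
    apply hW.weaklySaturated.of_comp_right
      (X := Cat.of (Tw ↥A)) (Y := Cat.of (Tw ↥B)) (Z := Cat.of (↥B)ᵒᵖ)
      (twmap (F.toFunctor : ↥A ⥤ ↥B)).toCatHom (twr ↥B).toCatHom (tw_r_mem hW B)
    show W (twmap (F.toFunctor : ↥A ⥤ ↥B) ⋙ twr ↥B).toCatHom
    rw [twmap_r]
    exact hW.weaklySaturated.comp_mem (X := Cat.of (Tw ↥A)) (Y := Cat.of (↥A)ᵒᵖ)
      (Z := Cat.of (↥B)ᵒᵖ) (twr ↥A).toCatHom (Functor.op (F.toFunctor : ↥A ⥤ ↥B)).toCatHom (tw_r_mem hW A) hop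
  apply hW.weaklySaturated.of_comp_left (X := Cat.of (Tw ↥A)) (twq ↥A).toCatHom F (tw_q_mem hW A)
  show W (twq ↥A ⋙ (F.toFunctor : ↥A ⥤ ↥B)).toCatHom
  rw [← twmap_q]
  exact hW.weaklySaturated.comp_mem (X := Cat.of (Tw ↥A)) (Y := Cat.of (Tw ↥B))
    (Z := B) (twmap (F.toFunctor : ↥A ⥤ ↥B)).toCatHom (twq ↥B).toCatHom h1 (tw_q_mem hW B)

end cat
section fiber

variable {I J : Type u} [Category.{u} I] [Category.{u} J]

/-- Inclusion of the fiber into the coslice. -/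
def fibInc (p : I ⥤ J) (j : J) : p.Fiber j ⥤ StructuredArrow j p where
  obj x := StructuredArrow.mk (Y := x.1) (eqToHom x.2.symm)
  map {x y} φ := StructuredArrow.homMk (Functor.Fiber.fiberInclusion.map φ) (by
    haveI := φ.2
    have hfac := IsHomLift.fac' p (𝟙 j) φ.1
    dsimp
    rw [show (Functor.Fiber.fiberInclusion.map φ : x.1 ⟶ y.1) = φ.1 from rfl, hfac]
    simp)
  map_id x := by
    apply StructuredArrow.hom_ext
    rfl
  map_comp f g := by
    apply StructuredArrow.hom_ext
    rfl

noncomputable def fibIncCommaTerminal (p : I ⥤ J) [p.IsFibered] (j : J)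
    (e : StructuredArrow j p) :
    IsTerminal (⟨⟨Functor.IsPreFibered.pullbackObj rfl e.hom,
        Functor.IsPreFibered.pullbackObj_proj rfl e.hom⟩, ⟨⟨⟩⟩,
      StructuredArrow.homMk (Functor.IsPreFibered.pullbackMap rfl e.hom)
        (by erw [IsHomLift.fac' p e.hom (Functor.IsPreFibered.pullbackMap rfl e.hom)]
            simp [fibInc]
            exact (eqToHom_trans_assoc (Functor.IsPreFibered.pullbackObj_proj rfl e.hom).symm _ _).trans (by simp))⟩ :
      Comma (fibInc p j ⋙ 𝟭 (StructuredArrow j p)) (Functor.fromPUnit.{u} e)) := by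
  refine IsTerminal.ofUniqueHom (fun Y => ?_) (fun Y m => ?_)
  · haveI : p.IsHomLift e.hom Y.hom.right := by
      apply IsHomLift.of_fac' p e.hom Y.hom.right Y.left.2 rfl
      have hw : e.hom = eqToHom Y.left.2.symm ≫ p.map Y.hom.right := by
        simpa [fibInc] using Y.hom.w.symm
      simp only [eqToHom_refl, Category.comp_id]
      rw [hw]
      have key : ∀ {a b c : J} (h1 : a = b) (h2 : b = a) (g : a ⟶ c), g = eqToHom h1 ≫ eqToHom h2 ≫ g := by
        intros; subst_vars; simp
      exact key _ _ _
    haveI : p.IsHomLift e.hom (Y.hom.right : Y.left.1 ⟶ e.right) := this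
    refine ⟨⟨@Functor.IsCartesian.map _ _ _ _ p _ _ _ _ e.hom (Functor.IsPreFibered.pullbackMap rfl e.hom) _ _ Y.hom.right this,
        @Functor.IsCartesian.map_isHomLift _ _ _ _ p _ _ _ _ e.hom _ _ _ Y.hom.right this⟩, ⟨⟨Subsingleton.elim _ _⟩⟩, ?_⟩
    apply StructuredArrow.hom_ext
    dsimp [fibInc]
    simp only [Category.comp_id]
    exact Functor.IsCartesian.fac p e.hom (Functor.IsPreFibered.pullbackMap rfl e.hom) Y.hom.right
  · haveI : p.IsHomLift e.hom Y.hom.right := by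
      apply IsHomLift.of_fac' p e.hom Y.hom.right Y.left.2 rfl
      have hw : e.hom = eqToHom Y.left.2.symm ≫ p.map Y.hom.right := by
        simpa [fibInc] using Y.hom.w.symm
      simp only [eqToHom_refl, Category.comp_id]
      rw [hw]
      have key : ∀ {a b c : J} (h1 : a = b) (h2 : b = a) (g : a ⟶ c), g = eqToHom h1 ≫ eqToHom h2 ≫ g := by
        intros; subst_vars; simp
      exact key _ _ _
    haveI : p.IsHomLift e.hom (Y.hom.right : Y.left.1 ⟶ e.right) := this
    apply CommaMorphism.ext
    · apply Functor.Fiber.hom_ext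
      haveI := m.left.2
      apply @Functor.IsCartesian.map_uniq _ _ _ _ p _ _ _ _ e.hom
        (Functor.IsPreFibered.pullbackMap rfl e.hom) _ _ Y.hom.right ‹p.IsHomLift e.hom (Y.hom.right : Y.left.1 ⟶ e.right)› _ m.left.2
      have hw := congrArg CommaMorphism.right m.w
      simp [fibInc] at hw
      exact hw
    · exact Subsingleton.elim _ _

end fiber

def commaCSAEquiv {A B : Type u} [Category.{u} A] [Category.{u} B] (G : A ⥤ B) (d : B) :
    Comma G (Functor.fromPUnit.{u} d) ≌ CostructuredArrow G d where
  functor :=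
    { obj := fun X => CostructuredArrow.mk X.hom
      map := fun m => CostructuredArrow.homMk m.left (by simpa using m.w)
      map_id := fun X => by
        apply CostructuredArrow.hom_ext
        rfl
      map_comp := fun f g => by
        apply CostructuredArrow.hom_ext
        rfl }
  inverse :=
    { obj := fun X => ⟨X.left, ⟨⟨⟩⟩, X.hom⟩
      map := fun m => ⟨m.left, ⟨⟨Subsingleton.elim _ _⟩⟩, by simpa using m.w⟩
      map_id := fun X => by
        apply CommaMorphism.ext
        · rfl
        · exact Subsingleton.elim _ _
      map_comp := fun f g => by
        apply CommaMorphism.ext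
        · rfl
        · exact Subsingleton.elim _ _ }
  unitIso := NatIso.ofComponents (fun X => Iso.refl _) (by
    intros
    apply CommaMorphism.ext
    · simp
    · exact Subsingleton.elim _ _)
  counitIso := NatIso.ofComponents (fun X => Iso.refl _) (by
    intros
    apply CostructuredArrow.hom_ext
    simp)
  functor_unitIso_comp := by
    intros
    apply CostructuredArrow.hom_ext
    simp

end BL

/-- If `α : I ⟶ J` is a Grothendieck fibration all of whose fibers are
`W`-aspherical, then `α ∈ W`. -/
theorem IsBasicLocalizer.fibration_mem {W : MorphismProperty Cat.{u, u}}
    (hW : IsBasicLocalizer W) {I J : Cat.{u, u}} (α : I ⟶ J)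
    [Functor.IsFibered (α.toFunctor : ↥I ⥤ ↥J)]
    (h : ∀ j : ↥J,
      W (X := Cat.of (Functor.Fiber (α.toFunctor : ↥I ⥤ ↥J) j)) (Y := Cat.pt.{u})
        (Functor.star (Functor.Fiber (α.toFunctor : ↥I ⥤ ↥J) j)).toCatHom) :
    W α := by
  apply BL.mem_of_op hW α
  apply BL.asph hW
  intro k
  have hι : W (X := Cat.of (α.toFunctor.Fiber k.unop))
      (Y := Cat.of (StructuredArrow k.unop α.toFunctor))
      (BL.fibInc α.toFunctor k.unop).toCatHom := by
    apply BL.asph hW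
    intro e
    have ht := (BL.fibIncCommaTerminal α.toFunctor k.unop e).hasTerminal
    exact @IsBasicLocalizer.terminal W hW (Cat.of _) ht
  have hSA : W (BL.pstar (Cat.of (StructuredArrow k.unop α.toFunctor))) :=
    BL.star_mem_of_comp hW _ hι (h k.unop)
  have hSAop : W (BL.pstar (Cat.of ((StructuredArrow k.unop α.toFunctor)ᵒᵖ))) :=
    BL.star_op_mem hW _ hSA
  have he2 : W (X := Cat.of (CostructuredArrow (Functor.op α.toFunctor) (Opposite.op k.unop)))
      (Y := Cat.of ((StructuredArrow k.unop α.toFunctor)ᵒᵖ))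
      ((structuredArrowOpEquivalence α.toFunctor k.unop).symm.functor.toCatHom) :=
    BL.equiv_mem hW (A := Cat.of (CostructuredArrow (Functor.op α.toFunctor) (Opposite.op k.unop)))
      (B := Cat.of ((StructuredArrow k.unop α.toFunctor)ᵒᵖ)) ((structuredArrowOpEquivalence α.toFunctor k.unop).symm)
  have hCSA : W (BL.pstar (Cat.of (CostructuredArrow (Functor.op α.toFunctor) (Opposite.op k.unop)))) :=
    BL.star_mem_comp hW _ he2 hSAop
  have he1 : W (X := Cat.of (Comma (Functor.op α.toFunctor) (Functor.fromPUnit.{u} (Opposite.op k.unop))))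
      (Y := Cat.of (CostructuredArrow (Functor.op α.toFunctor) (Opposite.op k.unop)))
      ((BL.commaCSAEquiv (Functor.op α.toFunctor) (Opposite.op k.unop)).functor.toCatHom) :=
    BL.equiv_mem hW (A := Cat.of (Comma (Functor.op α.toFunctor) (Functor.fromPUnit.{u} (Opposite.op k.unop))))
      (B := Cat.of (CostructuredArrow (Functor.op α.toFunctor) (Opposite.op k.unop))) (BL.commaCSAEquiv (Functor.op α.toFunctor) (Opposite.op k.unop))
  exact BL.star_mem_comp hW _ he1 hCSA
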